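/- arXiv:1504.03215 — 2 statements merged into one kernel-verified Lean document; each statement's English description precedes it below -/
import Mathlib

section
/- For any unit vector ω ∈ ℝ³, the hard-sphere collision map C_ω preserves the Lebesgue measure on ℝ³ × ℝ³ ≅ ℝ⁶: the pushforward of the Lebesgue (volume) measure under C_ω equals the Lebesgue measure. -/
open scoped RealInnerProductSpace
open MeasureTheory

/-- The hard-sphere collision map `C_ω` on pairs of velocities. -/
noncomputable def collisionMap (ω : EuclideanSpace ℝ (Fin 3)) :
    EuclideanSpace ℝ (Fin 3) × EuclideanSpace ℝ (Fin 3) →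
      EuclideanSpace ℝ (Fin 3) × EuclideanSpace ℝ (Fin 3) :=
  fun p => (p.1 - ⟪ω, p.1 - p.2⟫ • ω, p.2 + ⟪ω, p.1 - p.2⟫ • ω)

/-- The collision map as a linear map. -/
noncomputable def collisionLin (ω : EuclideanSpace ℝ (Fin 3)) :
    (EuclideanSpace ℝ (Fin 3) × EuclideanSpace ℝ (Fin 3)) →ₗ[ℝ]
      (EuclideanSpace ℝ (Fin 3) × EuclideanSpace ℝ (Fin 3)) where
  toFun := collisionMap ω
  map_add' p q := by
    simp only [collisionMap, Prod.fst_add, Prod.snd_add, Prod.mk_add_mk, Prod.mk.injEq]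
    constructor <;>
    · rw [show p.1 + q.1 - (p.2 + q.2) = (p.1 - p.2) + (q.1 - q.2) by abel, inner_add_right,
        add_smul]
      abel
  map_smul' c p := by
    simp only [collisionMap, Prod.smul_fst, Prod.smul_snd, Prod.smul_mk, RingHom.id_apply,
      Prod.mk.injEq, smul_sub, smul_add]
    constructor <;>
    · rw [show c • p.1 - c • p.2 = c • (p.1 - p.2) by rw [smul_sub], inner_smul_right,
        mul_smul]

theorem collisionLin_involutive (ω : EuclideanSpace ℝ (Fin 3)) (hω : ‖ω‖ = 1) :
    (collisionLin ω).comp (collisionLin ω) = LinearMap.id := by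
  have hωω : ⟪ω, ω⟫ = 1 := by
    rw [real_inner_self_eq_norm_sq, hω]; norm_num
  refine LinearMap.ext fun p => ?_
  simp only [LinearMap.comp_apply, LinearMap.id_apply, collisionLin, LinearMap.coe_mk,
    AddHom.coe_mk, collisionMap]
  have key : ⟪ω, p.1 - ⟪ω, p.1 - p.2⟫ • ω - (p.2 + ⟪ω, p.1 - p.2⟫ • ω)⟫
      = -⟪ω, p.1 - p.2⟫ := by
    rw [show p.1 - ⟪ω, p.1 - p.2⟫ • ω - (p.2 + ⟪ω, p.1 - p.2⟫ • ω)
        = (p.1 - p.2) - (2 * ⟪ω, p.1 - p.2⟫) • ω by rw [two_mul, add_smul]; abel,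
      inner_sub_right, inner_smul_right, hωω]
    ring
  refine Prod.ext ?_ ?_ <;> simp only [key, neg_smul] <;> abel

/-- The hard-sphere collision map preserves the Lebesgue measure on `ℝ³ × ℝ³ ≅ ℝ⁶`:
the pushforward of the Lebesgue measure under `C_ω` is the Lebesgue measure. -/
theorem collisionMap_measurePreserving (ω : EuclideanSpace ℝ (Fin 3)) (hω : ‖ω‖ = 1) :
    Measure.map (collisionMap ω)
        (volume : Measure (EuclideanSpace ℝ (Fin 3) × EuclideanSpace ℝ (Fin 3)))
      = volume := by
  haveI : (volume :
      Measure (EuclideanSpace ℝ (Fin 3) × EuclideanSpace ℝ (Fin 3))).IsAddHaarMeasure := by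
    have : (volume : Measure (EuclideanSpace ℝ (Fin 3) × EuclideanSpace ℝ (Fin 3)))
        = (volume : Measure (EuclideanSpace ℝ (Fin 3))).prod volume := rfl
    rw [this]
    exact Measure.prod.instIsAddHaarMeasure _ _
  have hdet : LinearMap.det (collisionLin ω) * LinearMap.det (collisionLin ω) = 1 := by
    rw [← LinearMap.det_comp, collisionLin_involutive ω hω, LinearMap.det_id]
  have habs : |LinearMap.det (collisionLin ω)| = 1 := by
    rcases mul_self_eq_one_iff.mp hdet with h | h <;> rw [h] <;> norm_num
  have hne : LinearMap.det (collisionLin ω) ≠ 0 := by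
    intro h; rw [h, abs_zero] at habs; norm_num at habs
  have hmap := Measure.map_linearMap_addHaar_eq_smul_addHaar
    (volume : Measure (EuclideanSpace ℝ (Fin 3) × EuclideanSpace ℝ (Fin 3))) hne
  have hcoe : ⇑(collisionLin ω) = collisionMap ω := rfl
  rw [hcoe] at hmap
  rw [hmap, abs_inv, habs]
  simp
end

section
/- Let V ∈ ℝ³ with V ≠ 0, let ε > 0 and T > 0, and let S²₊ = {ω ∈ S² : ω·V > 0}, where S² is the unit sphere of ℝ³. Then the map Φ : (0, T) × S²₊ → ℝ³ defined by Φ(t, ω) = εω + tV is injective, and the pushforward under Φ of the measure ε²(ω·V) dt dσ(ω) (dt Lebesgue on (0,T), dσ the surface measure on S²) equals the Lebesgue measure on ℝ³ restricted to the image Φ((0, T) × S²₊). -/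
open MeasureTheory Metric
open scoped RealInnerProductSpace ENNReal

open MeasureTheory Metric
open scoped RealInnerProductSpace ENNReal

noncomputable section CreationAux

abbrev E3 := EuclideanSpace ℝ (Fin 3)

def Gmap (V : E3) (ε : ℝ) (x : E3) : E3 := (ε * ‖x‖⁻¹) • x + (3⁻¹ * ‖x‖ ^ 3) • V

def Amap (V : E3) (ε : ℝ) (x : E3) : E3 →L[ℝ] E3 :=
  (ε * ‖x‖⁻¹) • ContinuousLinearMap.id ℝ E3
    + (innerSL ℝ x).smulRight ((-(ε * (‖x‖ ^ 3)⁻¹)) • x + ‖x‖ • V)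

lemma aux_map_withDensity {α β : Type*} [MeasurableSpace α] [MeasurableSpace β]
    {f : α → β} (hf : Measurable f) (μ : Measure α) {g : β → ℝ≥0∞} (hg : Measurable g) :
    Measure.map f (μ.withDensity (g ∘ f)) = (Measure.map f μ).withDensity g := by
  ext s hs
  rw [Measure.map_apply hf hs, withDensity_apply _ hs, withDensity_apply _ (hf hs),
    setLIntegral_map hs hg hf]
  rfl

lemma aux_hasFDerivAt_norm {E : Type*} [NormedAddCommGroup E] [InnerProductSpace ℝ E]
    {x : E} (hx : x ≠ 0) :
    HasFDerivAt (fun y : E => ‖y‖) (‖x‖⁻¹ • innerSL ℝ x) x := by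
  have hr : ‖x‖ ≠ 0 := norm_ne_zero_iff.2 hx
  have h1 : HasFDerivAt (fun y : E => ‖y‖ ^ 2) ((2:ℕ) • innerSL ℝ x) x := by
    simpa using (hasFDerivAt_id x).norm_sq
  have h2 : HasDerivAt Real.sqrt (1 / (2 * Real.sqrt (‖x‖ ^ 2))) (‖x‖ ^ 2) :=
    Real.hasDerivAt_sqrt (by positivity)
  have h3 := h2.comp_hasFDerivAt x h1
  have heq : (Real.sqrt ∘ fun y : E => ‖y‖ ^ 2) = fun y : E => ‖y‖ := by
    funext y; simp [Function.comp, Real.sqrt_sq (norm_nonneg y)]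
  rw [heq] at h3
  refine h3.congr_fderiv (Eq.symm ?_)
  rw [Real.sqrt_sq (norm_nonneg x)]
  ext h
  simp only [ContinuousLinearMap.smul_apply, smul_eq_mul]
  field_simp
  ring

lemma hasFDerivAt_Gmap (V : E3) (ε : ℝ) {x : E3} (hx : x ≠ 0) :
    HasFDerivAt (Gmap V ε) (Amap V ε x) x := by
  have hr : ‖x‖ ≠ 0 := norm_ne_zero_iff.2 hx
  set N : E3 →L[ℝ] ℝ := ‖x‖⁻¹ • innerSL ℝ x with hN
  have hn : HasFDerivAt (fun y : E3 => ‖y‖) N x := aux_hasFDerivAt_norm hx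
  have hinv : HasFDerivAt (fun y : E3 => ‖y‖⁻¹) ((-(‖x‖ ^ 2)⁻¹) • N) x := by
    exact (hasDerivAt_inv hr).comp_hasFDerivAt x hn
  have hc1 : HasFDerivAt (fun y : E3 => ε * ‖y‖⁻¹) (ε • ((-(‖x‖ ^ 2)⁻¹) • N)) x :=
    hinv.const_mul ε
  have hf1 := hc1.smul (hasFDerivAt_id x)
  have hpow : HasFDerivAt (fun y : E3 => ‖y‖ ^ 3) ((((3:ℕ):ℝ) * ‖x‖ ^ 2) • N) x := by
    simpa [Function.comp_def] using (hasDerivAt_pow 3 ‖x‖).comp_hasFDerivAt x hn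
  have hc2 : HasFDerivAt (fun y : E3 => 3⁻¹ * ‖y‖ ^ 3)
      (((3:ℝ)⁻¹) • ((((3:ℕ):ℝ) * ‖x‖ ^ 2) • N)) x :=
    hpow.const_mul 3⁻¹
  have hf2 := hc2.smul (hasFDerivAt_const V x)
  have htot := hf1.add hf2
  refine htot.congr_fderiv (Eq.symm ?_)
  refine ContinuousLinearMap.ext fun h => ?_
  simp only [Amap, hN, ContinuousLinearMap.add_apply, ContinuousLinearMap.smul_apply,
    ContinuousLinearMap.coe_smul', Pi.smul_apply, ContinuousLinearMap.id_apply,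
    ContinuousLinearMap.smulRight_apply, ContinuousLinearMap.coe_id', id_eq,
    innerSL_apply_apply, smul_eq_mul, smul_add, smul_smul,
    ContinuousLinearMap.zero_apply, add_zero, smul_zero]
  match_scalars <;> (field_simp; try ring)

lemma aux_det_rank_one (x w : EuclideanSpace ℝ (Fin 3)) :
    (ContinuousLinearMap.id ℝ (EuclideanSpace ℝ (Fin 3))
      + (innerSL ℝ x).smulRight w).det = 1 + ⟪x, w⟫ := by
  classical
  set b := (EuclideanSpace.basisFun (Fin 3) ℝ).toBasis with hb
  rw [ContinuousLinearMap.det, ← LinearMap.det_toMatrix b]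
  have hM : LinearMap.toMatrix b b
      ((ContinuousLinearMap.id ℝ (EuclideanSpace ℝ (Fin 3))
        + (innerSL ℝ x).smulRight w) : EuclideanSpace ℝ (Fin 3) →ₗ[ℝ] EuclideanSpace ℝ (Fin 3))
      = 1 + Matrix.replicateCol (Fin 1) (fun i => w i) * Matrix.replicateRow (Fin 1) (fun j => x j) := by
    ext i j
    rw [LinearMap.toMatrix_apply]
    simp [hb, Matrix.mul_apply, Matrix.one_apply,
      EuclideanSpace.basisFun_apply, EuclideanSpace.inner_single_right,
      OrthonormalBasis.coe_toBasis_repr_apply, EuclideanSpace.basisFun_repr,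
      EuclideanSpace.single_apply, mul_comm, eq_comm]
  rw [ContinuousLinearMap.coe_add, hM]
  convert Matrix.det_one_add_replicateCol_mul_replicateRow (ι := Fin 1) (fun i => w i) (fun j => x j) using 2
  · rfl
  · simp [dotProduct, PiLp.inner_apply, RCLike.inner_apply, mul_comm]

lemma det_Amap (V : E3) {ε : ℝ} (hε : ε ≠ 0) {x : E3} (hx : x ≠ 0) :
    (Amap V ε x).det = ε ^ 2 * (‖x‖⁻¹ * ⟪x, V⟫) := by
  have hr : ‖x‖ ≠ 0 := norm_ne_zero_iff.2 hx
  set c : ℝ := ε * ‖x‖⁻¹ with hc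
  have hc0 : c ≠ 0 := mul_ne_zero hε (inv_ne_zero hr)
  set u : E3 := (-(ε * (‖x‖ ^ 3)⁻¹)) • x + ‖x‖ • V with hu
  have hA : Amap V ε x
      = c • (ContinuousLinearMap.id ℝ E3 + (innerSL ℝ x).smulRight (c⁻¹ • u)) := by
    refine ContinuousLinearMap.ext fun h => ?_
    simp only [Amap, ContinuousLinearMap.add_apply, ContinuousLinearMap.smul_apply,
      ContinuousLinearMap.id_apply, ContinuousLinearMap.smulRight_apply, innerSL_apply_apply,
      smul_add, smul_smul, ← hu, ← hc]
    congr 1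
    rw [mul_comm c, mul_assoc, inv_mul_cancel₀ hc0, mul_one]
  have hdet : (c • (ContinuousLinearMap.id ℝ E3 + (innerSL ℝ x).smulRight (c⁻¹ • u))).det
      = c ^ 3 * (1 + ⟪x, c⁻¹ • u⟫) := by
    have h1 := aux_det_rank_one x (c⁻¹ • u)
    rw [ContinuousLinearMap.det] at h1 ⊢
    rw [ContinuousLinearMap.coe_smul, LinearMap.det_smul, finrank_euclideanSpace_fin, h1]
  rw [hA, hdet, real_inner_smul_right, hu, inner_add_right, real_inner_smul_right,
    real_inner_smul_right, real_inner_self_eq_norm_sq, hc]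
  field_simp
  ring

lemma aux_injOn (V : E3) (ε T : ℝ) (hε : 0 < ε) :
    Set.InjOn
        (fun p : ℝ × sphere (0 : E3) 1 => ε • (p.2 : E3) + p.1 • V)
        (Set.Ioo 0 T ×ˢ {ω : sphere (0 : E3) 1 | 0 < ⟪(ω : E3), V⟫}) := by
  rintro ⟨t₁, ω₁⟩ ⟨ht₁, hω₁⟩ ⟨t₂, ω₂⟩ ⟨ht₂, hω₂⟩ h
  simp only [Set.mem_setOf_eq] at hω₁ hω₂
  simp only at h
  have h' : ε • ((ω₁ : E3) - ω₂) = (t₂ - t₁) • V := by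
    rw [smul_sub, sub_smul, sub_eq_sub_iff_add_eq_add, add_comm ((t₂:ℝ) • V)]
    exact h
  have hn₁ : ‖(ω₁ : E3)‖ = 1 := by simpa using mem_sphere_zero_iff_norm.1 ω₁.2
  have hn₂ : ‖(ω₂ : E3)‖ = 1 := by simpa using mem_sphere_zero_iff_norm.1 ω₂.2
  have hz : ⟪(ω₁ : E3) - ω₂, (ω₁ : E3) + ω₂⟫ = 0 := by
    rw [inner_sub_left, inner_add_right, inner_add_right,
      real_inner_self_eq_norm_sq, real_inner_self_eq_norm_sq, hn₁, hn₂,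
      real_inner_comm (ω₂ : E3) ω₁]
    ring
  have hkey : (t₂ - t₁) * ⟪V, (ω₁ : E3) + ω₂⟫ = 0 := by
    have := congrArg (fun y => ⟪y, (ω₁ : E3) + ω₂⟫) h'
    simpa only [real_inner_smul_left, hz, mul_zero] using this.symm
  have hpos : 0 < ⟪V, (ω₁ : E3) + ω₂⟫ := by
    rw [inner_add_right]
    linarith [real_inner_comm (ω₁ : E3) V, real_inner_comm (ω₂ : E3) V]
  have ht : t₁ = t₂ := by
    rcases mul_eq_zero.1 hkey with h0 | h0
    · linarith
    · exact absurd h0 hpos.ne'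
  have hω : (ω₁ : E3) = ω₂ := by
    have h2 : ε • (ω₁ : E3) = ε • (ω₂ : E3) := by
      have h4 : ((t₂ - t₁ : ℝ)) • V = 0 := by rw [← ht]; simp
      have h3 := h'
      rw [h4, smul_sub, sub_eq_zero] at h3
      exact h3
    exact smul_right_injective _ hε.ne' h2
  exact Prod.ext ht (Subtype.ext hω)

lemma aux_cube_image (T : ℝ) (hT : 0 < T) :
    (fun r : ℝ => 3⁻¹ * r ^ 3) '' Set.Ioo 0 ((3*T) ^ ((1:ℝ)/3)) = Set.Ioo 0 T := by
  have h3T : (0:ℝ) < 3 * T := by linarith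
  have hR0 : (0:ℝ) < (3*T) ^ ((1:ℝ)/3) := Real.rpow_pos_of_pos h3T _
  have hR3 : ((3*T) ^ ((1:ℝ)/3)) ^ (3:ℕ) = 3 * T := by
    rw [← Real.rpow_natCast ((3*T) ^ ((1:ℝ)/3)) 3, ← Real.rpow_mul h3T.le]
    norm_num
  ext t
  constructor
  · rintro ⟨r, ⟨hr0, hrR⟩, rfl⟩
    constructor
    · positivity
    · have : r ^ 3 < ((3*T) ^ ((1:ℝ)/3)) ^ (3:ℕ) := by
        exact pow_lt_pow_left₀ hrR hr0.le (by norm_num)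
      rw [hR3] at this
      linarith
  · rintro ⟨ht0, htT⟩
    refine ⟨(3*t) ^ ((1:ℝ)/3), ⟨Real.rpow_pos_of_pos (by linarith) _, ?_⟩, ?_⟩
    · exact Real.rpow_lt_rpow (by linarith) (by linarith) (by norm_num)
    · have h3t : (0:ℝ) < 3 * t := by linarith
      have h5 : ((3*t) ^ ((1:ℝ)/3)) ^ (3:ℕ) = 3 * t := by
        rw [← Real.rpow_natCast ((3*t) ^ ((1:ℝ)/3)) 3, ← Real.rpow_mul h3t.le]
        norm_num
      show 3⁻¹ * ((3*t) ^ ((1:ℝ)/3)) ^ (3:ℕ) = t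
      rw [h5]
      ring

lemma aux_1d (T : ℝ) (hT : 0 < T) :
    Measure.map (fun r : ℝ => 3⁻¹ * r ^ 3)
      ((volume.restrict (Set.Ioo 0 ((3*T) ^ ((1:ℝ)/3)))).withDensity
        fun r => ENNReal.ofReal (r ^ 2))
      = volume.restrict (Set.Ioo 0 T) := by
  set R : ℝ := (3*T) ^ ((1:ℝ)/3) with hR
  have hderiv : ∀ r ∈ Set.Ioo (0:ℝ) R, HasFDerivWithinAt (fun r : ℝ => 3⁻¹ * r ^ 3)
      ((ContinuousLinearMap.smulRight (1 : ℝ →L[ℝ] ℝ) (r ^ 2))) (Set.Ioo 0 R) r := by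
    intro r _
    have h1 : HasDerivAt (fun r : ℝ => 3⁻¹ * r ^ 3) (r ^ 2) r := by
      have := (hasDerivAt_pow 3 r).const_mul (3⁻¹ : ℝ)
      refine this.congr_deriv (Eq.symm ?_)
      push_cast
      norm_num
      ring
    exact h1.hasFDerivAt.hasFDerivWithinAt
  have hdet : ∀ r : ℝ, (ContinuousLinearMap.smulRight (1 : ℝ →L[ℝ] ℝ) (r ^ 2)).det = r ^ 2 := by
    intro r
    have h2 : (ContinuousLinearMap.smulRight (1 : ℝ →L[ℝ] ℝ) (r ^ 2))
        = (r ^ 2) • (ContinuousLinearMap.id ℝ ℝ) := by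
      ext
      simp [mul_comm]
    rw [ContinuousLinearMap.det, h2, ContinuousLinearMap.coe_smul, LinearMap.det_smul]
    simp
  have hinj : Set.InjOn (fun r : ℝ => 3⁻¹ * r ^ 3) (Set.Ioo 0 R) := by
    intro a ha b hb hab
    simp only at hab
    have h3 : a ^ 3 = b ^ 3 := by linarith
    apply le_antisymm <;> nlinarith [sq_nonneg (a+b), sq_nonneg (a-b), mul_pos ha.1 hb.1]
  have hmeas : Measurable (fun r : ℝ => 3⁻¹ * r ^ 3) := by measurability
  have hcongr : (fun r : ℝ => ENNReal.ofReal (r ^ 2))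
      = fun r => ENNReal.ofReal |(ContinuousLinearMap.smulRight (1 : ℝ →L[ℝ] ℝ) (r ^ 2)).det| := by
    funext r
    rw [hdet, abs_of_nonneg (sq_nonneg r)]
  rw [hcongr, map_withDensity_abs_det_fderiv_eq_addHaar volume measurableSet_Ioo.nullMeasurableSet hderiv hinj,
    aux_cube_image T hT]

end CreationAux

section CreationMain

open Set

set_option maxHeartbeats 1000000 in
lemma aux_measure (V : E3) (hV : V ≠ 0) (ε T : ℝ) (hε : 0 < ε) (hT : 0 < T) :
    Measure.map
        (fun p : ℝ × sphere (0 : E3) 1 => ε • (p.2 : E3) + p.1 • V)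
        (((volume.restrict (Set.Ioo 0 T)).prod
            (((volume : Measure E3).toSphere).restrict
              {ω : sphere (0 : E3) 1 | 0 < ⟪(ω : E3), V⟫})).withDensity
          (fun p => ENNReal.ofReal (ε ^ 2 * ⟪(p.2 : E3), V⟫)))
      = volume.restrict
          ((fun p : ℝ × sphere (0 : E3) 1 => ε • (p.2 : E3) + p.1 • V) ''
            (Set.Ioo 0 T ×ˢ {ω : sphere (0 : E3) 1 | 0 < ⟪(ω : E3), V⟫})) := by
  classical
  set Φ : ℝ × sphere (0 : E3) 1 → E3 :=
    fun p => ε • (p.2 : E3) + p.1 • V with hΦdef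
  set Sp : Set (sphere (0 : E3) 1) := {ω : sphere (0 : E3) 1 | 0 < ⟪(ω : E3), V⟫} with hSp
  set σ : Measure (sphere (0 : E3) 1) := (volume : Measure E3).toSphere with hσ
  set ν : Measure (Set.Ioi (0:ℝ)) := Measure.volumeIoiPow 2 with hν
  set R : ℝ := (3*T) ^ ((1:ℝ)/3) with hRdef
  have h3T : (0:ℝ) < 3 * T := by linarith
  have hR0 : (0:ℝ) < R := Real.rpow_pos_of_pos h3T _
  have hR3 : R ^ (3:ℕ) = 3 * T := by
    rw [hRdef, ← Real.rpow_natCast ((3*T) ^ ((1:ℝ)/3)) 3, ← Real.rpow_mul h3T.le]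
    norm_num
  set J : Set (Set.Ioi (0:ℝ)) := (Subtype.val ⁻¹' (Set.Iio R)) with hJ
  set U : Set E3 := {x | ‖x‖ < R} ∩ {x | 0 < ⟪x, V⟫} with hU
  set ρ : ℝ × sphere (0 : E3) 1 → ℝ≥0∞ :=
    fun p => ENNReal.ofReal (ε ^ 2 * ⟪(p.2 : E3), V⟫) with hρ
  set ρ' : E3 → ℝ≥0∞ := fun x => ENNReal.ofReal (ε ^ 2 * ⟪‖x‖⁻¹ • x, V⟫) with hρ'
  -- basic measurability
  have hΦc : Continuous Φ := by
    exact ((continuous_subtype_val.comp continuous_snd).const_smul ε).add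
      (continuous_fst.smul continuous_const)
  have hΦm : Measurable Φ := hΦc.measurable
  have hSpm : MeasurableSet Sp :=
    measurableSet_lt measurable_const
      ((Continuous.inner continuous_subtype_val continuous_const).measurable)
  have hJm : MeasurableSet J := measurable_subtype_coe measurableSet_Iio
  have hUm : MeasurableSet U :=
    ((isOpen_lt continuous_norm continuous_const).inter
      (isOpen_lt continuous_const (Continuous.inner continuous_id continuous_const))).measurableSet
  have hU0 : ∀ x ∈ U, x ≠ 0 := by
    rintro x ⟨-, hx2⟩ rfl
    simp only [Set.mem_setOf_eq, inner_zero_left, lt_self_iff_false] at hx2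
  have hρm : Measurable ρ := by
    apply ENNReal.measurable_ofReal.comp
    exact (measurable_const.mul
      ((Continuous.inner (continuous_subtype_val.comp continuous_snd)
        continuous_const).measurable))
  have hρ'm : Measurable ρ' := by
    apply ENNReal.measurable_ofReal.comp
    apply measurable_const.mul
    exact Measurable.inner ((measurable_norm.inv).smul measurable_id) measurable_const
  have hGm : Measurable (Gmap V ε) := by
    unfold Gmap
    exact (((measurable_norm.inv).const_mul ε).smul measurable_id).add
      (((measurable_norm.pow_const 3).const_mul 3⁻¹).smul_const V)
  -- the polar homeomorphism
  set e := homeomorphUnitSphereProd E3 with he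
  have MP : MeasurePreserving e ((volume : Measure E3).comap Subtype.val)
      (σ.prod ν) := by
    have h := Measure.measurePreserving_homeomorphUnitSphereProd (volume : Measure E3)
    simpa [finrank_euclideanSpace_fin] using h
  -- maps on products
  set c : Set.Ioi (0:ℝ) → ℝ := fun r => 3⁻¹ * (r:ℝ) ^ 3 with hc
  have hcm : Measurable c := (measurable_subtype_coe.pow_const 3).const_mul 3⁻¹
  set F : sphere (0 : E3) 1 × Set.Ioi (0:ℝ) → ℝ × sphere (0 : E3) 1 :=
    fun q => (c q.2, q.1) with hF
  have hFm : Measurable F := (hcm.comp measurable_snd).prodMk measurable_fst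
  -- step 1 : 1d pushforward
  have step1 : Measure.map Subtype.val (ν.restrict J)
      = (volume.restrict (Set.Ioo 0 R)).withDensity (fun r => ENNReal.ofReal (r ^ 2)) := by
    have emb : MeasurableEmbedding (Subtype.val : Set.Ioi (0:ℝ) → ℝ) :=
      MeasurableEmbedding.subtype_coe measurableSet_Ioi
    have h1 : ν = ((volume : Measure ℝ).comap Subtype.val).withDensity
        ((fun r : ℝ => ENNReal.ofReal (r ^ 2)) ∘ Subtype.val) := rfl
    rw [h1, restrict_withDensity hJm,
      aux_map_withDensity (g := fun r : ℝ => ENNReal.ofReal (r ^ 2))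
        measurable_subtype_coe _
        (ENNReal.measurable_ofReal.comp (measurable_id.pow_const 2)), hJ,
      ← emb.restrict_map, emb.map_comap, Subtype.range_coe,
      Measure.restrict_restrict measurableSet_Iio, Set.Iio_inter_Ioi]
  -- step 2
  have step2 : Measure.map c (ν.restrict J) = volume.restrict (Set.Ioo 0 T) := by
    have hceq : c = (fun r : ℝ => 3⁻¹ * r ^ 3) ∘ Subtype.val := rfl
    rw [hceq, ← Measure.map_map (by measurability) measurable_subtype_coe, step1]
    exact aux_1d T hT
  -- step 3 : product identification
  have step3 : (volume.restrict (Set.Ioo 0 T)).prod (σ.restrict Sp)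
      = Measure.map F ((σ.restrict Sp).prod (ν.restrict J)) := by
    have hPm : Measurable (Prod.map c (id : sphere (0 : E3) 1 → sphere (0 : E3) 1)) :=
      hcm.prodMap measurable_id
    have hFc : F = (Prod.map c id) ∘ Prod.swap := rfl
    rw [hFc, ← Measure.map_map hPm measurable_swap, Measure.prod_swap,
      ← Measure.map_prod_map _ _ hcm measurable_id, step2, Measure.map_id]
  -- step 4 : the preimage of the product set under e
  have step4 : e ⁻¹' (Sp ×ˢ J) = (Subtype.val ⁻¹' U :
      Set (({0}ᶜ : Set E3))) := by
    ext x
    have hxne : (x : E3) ≠ 0 := x.2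
    have hr : 0 < ‖(x : E3)‖ := norm_pos_iff.2 hxne
    have key : ∀ p : ℝ, 0 < ‖(x : E3)‖⁻¹ * p ↔ 0 < p := by
      intro p
      constructor
      · intro h
        have h2 := mul_pos hr h
        rwa [← mul_assoc, mul_inv_cancel₀ hr.ne', one_mul] at h2
      · exact fun h => mul_pos (inv_pos.2 hr) h
    simp only [Set.mem_preimage, Set.mem_prod, he, hSp, hJ, hU, Set.mem_setOf_eq,
      Set.mem_inter_iff, Set.mem_Iio,
      homeomorphUnitSphereProd_apply_fst_coe, homeomorphUnitSphereProd_apply_snd_coe,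
      real_inner_smul_left]
    rw [key]
    tauto
  -- step 5 : polar pushforward restricted
  have step5 : Measure.map e (((volume : Measure E3).comap Subtype.val).restrict
        (Subtype.val ⁻¹' U))
      = (σ.restrict Sp).prod (ν.restrict J) := by
    rw [Measure.prod_restrict, ← MP.map_eq,
      Measure.restrict_map MP.measurable (hSpm.prod hJm), step4]
  -- step 6 : pushing along the inclusion
  have step6 : Measure.map (Subtype.val : ({0}ᶜ : Set E3) → E3)
      ((((volume : Measure E3).comap (Subtype.val : ({0}ᶜ : Set E3) → E3)).restrict
        ((Subtype.val : ({0}ᶜ : Set E3) → E3) ⁻¹' U)))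
      = volume.restrict U := by
    have emb : MeasurableEmbedding (Subtype.val : ({0}ᶜ : Set E3) → E3) :=
      MeasurableEmbedding.subtype_coe (measurableSet_singleton (0:E3)).compl
    rw [← emb.restrict_map, emb.map_comap, Subtype.range_coe,
      Measure.restrict_restrict hUm]
    congr 1
    exact Set.inter_eq_self_of_subset_left fun x hx => hU0 x hx
  -- composite function identities
  have hcomp : (Φ ∘ F) ∘ e = Gmap V ε ∘ (Subtype.val : ({0}ᶜ : Set E3) → E3) := by
    funext x
    simp only [Function.comp_apply, he, hF, hΦdef, hc, Gmap,
      homeomorphUnitSphereProd_apply_fst_coe, homeomorphUnitSphereProd_apply_snd_coe,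
      smul_smul]
  have hdens : (ρ ∘ F) ∘ e = ρ' ∘ (Subtype.val : ({0}ᶜ : Set E3) → E3) := by
    funext x
    simp only [Function.comp_apply, he, hF, hρ, hρ',
      homeomorphUnitSphereProd_apply_fst_coe]
  -- density rewriting on U
  have hdensU : (volume.restrict U).withDensity ρ'
      = (volume.restrict U).withDensity (fun x => ENNReal.ofReal |(Amap V ε x).det|) := by
    apply withDensity_congr_ae
    rw [Filter.EventuallyEq, ae_restrict_iff' hUm]
    refine Filter.Eventually.of_forall fun x hx => ?_
    have hxne := hU0 x hx
    have hr : (0:ℝ) < ‖x‖ := norm_pos_iff.2 hxne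
    have hip : 0 < ⟪x, V⟫ := hx.2
    have hval : (Amap V ε x).det = ε ^ 2 * (‖x‖⁻¹ * ⟪x, V⟫) := det_Amap V hε.ne' hxne
    have habs : |(Amap V ε x).det| = ε ^ 2 * (‖x‖⁻¹ * ⟪x, V⟫) := by
      rw [hval]; exact abs_of_nonneg (by positivity)
    show ENNReal.ofReal (ε ^ 2 * ⟪‖x‖⁻¹ • x, V⟫) = ENNReal.ofReal |(Amap V ε x).det|
    rw [habs, real_inner_smul_left]
  -- injectivity of Gmap on U
  have hsphere : ∀ x : E3, x ≠ 0 → ‖x‖⁻¹ • x ∈ sphere (0:E3) 1 := by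
    intro x hx
    have hr : ‖x‖ ≠ 0 := norm_ne_zero_iff.2 hx
    rw [mem_sphere_zero_iff_norm, norm_smul, norm_inv, norm_norm, inv_mul_cancel₀ hr]
  have hmem : ∀ x, ∀ hx : x ∈ U, (3⁻¹ * ‖x‖ ^ 3, (⟨‖x‖⁻¹ • x, hsphere x (hU0 x hx)⟩ :
        sphere (0:E3) 1)) ∈ Set.Ioo (0:ℝ) T ×ˢ Sp := by
    intro x hx
    have hxne := hU0 x hx
    have hr : (0:ℝ) < ‖x‖ := norm_pos_iff.2 hxne
    refine ⟨⟨by positivity, ?_⟩, ?_⟩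
    · have h1 : ‖x‖ ^ (3:ℕ) < R ^ (3:ℕ) := pow_lt_pow_left₀ hx.1 (norm_nonneg x) (by norm_num)
      rw [hR3] at h1
      simp only
      linarith
    · simp only [hSp, Set.mem_setOf_eq, real_inner_smul_left]
      exact mul_pos (inv_pos.2 hr) hx.2
  have hGΦ : ∀ x, ∀ hx : x ∈ U, Gmap V ε x
      = Φ (3⁻¹ * ‖x‖ ^ 3, ⟨‖x‖⁻¹ • x, hsphere x (hU0 x hx)⟩) := by
    intro x hx
    simp only [Gmap, hΦdef, smul_smul]
  have hGinj : Set.InjOn (Gmap V ε) U := by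
    intro x hx y hy hxy
    have hxne := hU0 x hx
    have hyne := hU0 y hy
    have hrx : (0:ℝ) < ‖x‖ := norm_pos_iff.2 hxne
    have hry : (0:ℝ) < ‖y‖ := norm_pos_iff.2 hyne
    rw [hGΦ x hx, hGΦ y hy] at hxy
    have := aux_injOn V ε T hε (hmem x hx) (hmem y hy) hxy
    have ht : 3⁻¹ * ‖x‖ ^ 3 = 3⁻¹ * ‖y‖ ^ 3 := congrArg Prod.fst this
    have hω : (‖x‖⁻¹ • x : E3) = ‖y‖⁻¹ • y := by
      have := congrArg Prod.snd this
      exact congrArg Subtype.val this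
    have hnorm : ‖x‖ = ‖y‖ := by
      have h3 : ‖x‖ ^ 3 = ‖y‖ ^ 3 := by linarith
      apply le_antisymm <;>
        nlinarith [sq_nonneg (‖x‖ + ‖y‖), sq_nonneg (‖x‖ - ‖y‖), mul_pos hrx hry]
    calc x = ‖x‖ • (‖x‖⁻¹ • x) := (smul_inv_smul₀ hrx.ne' x).symm
    _ = ‖y‖ • (‖y‖⁻¹ • y) := by rw [hω, hnorm]
    _ = y := smul_inv_smul₀ hry.ne' y
  -- derivative hypothesis
  have hGderiv : ∀ x ∈ U, HasFDerivWithinAt (Gmap V ε) (Amap V ε x) U x :=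
    fun x hx => (hasFDerivAt_Gmap V ε (hU0 x hx)).hasFDerivWithinAt
  -- image identity
  have himage : Gmap V ε '' U = Φ '' (Set.Ioo 0 T ×ˢ Sp) := by
    apply Set.Subset.antisymm
    · rintro - ⟨x, hx, rfl⟩
      exact ⟨_, hmem x hx, (hGΦ x hx).symm⟩
    · rintro - ⟨⟨t, ω⟩, ⟨⟨ht0, htT⟩, hω⟩, rfl⟩
      have h3t : (0:ℝ) < 3 * t := by linarith
      set s : ℝ := (3*t) ^ ((1:ℝ)/3) with hs
      have hs0 : 0 < s := Real.rpow_pos_of_pos h3t _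
      have hs3 : s ^ (3:ℕ) = 3 * t := by
        rw [hs, ← Real.rpow_natCast ((3*t) ^ ((1:ℝ)/3)) 3, ← Real.rpow_mul h3t.le]
        norm_num
      have hωn : ‖(ω : E3)‖ = 1 := by simpa using mem_sphere_zero_iff_norm.1 ω.2
      refine ⟨s • (ω : E3), ⟨?_, ?_⟩, ?_⟩
      · simp only [Set.mem_setOf_eq, norm_smul, hωn, mul_one, Real.norm_eq_abs,
          abs_of_pos hs0]
        exact Real.rpow_lt_rpow h3t.le (by linarith) (by norm_num)
      · simp only [Set.mem_setOf_eq, real_inner_smul_left]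
        exact mul_pos hs0 hω
      · have hns : ‖s • (ω : E3)‖ = s := by
          rw [norm_smul, hωn, mul_one, Real.norm_eq_abs, abs_of_pos hs0]
        simp only [Gmap, hΦdef, hns, smul_smul]
        have h1 : ε * s⁻¹ * s = ε := by field_simp
        have h2 : 3⁻¹ * s ^ 3 = t := by rw [hs3]; ring
        rw [h1, h2]
    -- end himage
  -- now the chain of measure identities
  calc Measure.map Φ (((volume.restrict (Set.Ioo 0 T)).prod (σ.restrict Sp)).withDensity ρ)
      = Measure.map Φ ((Measure.map F ((σ.restrict Sp).prod (ν.restrict J))).withDensity ρ) := by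
        rw [← step3]
    _ = Measure.map Φ (Measure.map F (((σ.restrict Sp).prod (ν.restrict J)).withDensity
          (ρ ∘ F))) := by
        rw [aux_map_withDensity hFm _ hρm]
    _ = Measure.map Φ (Measure.map F ((Measure.map e
          ((((volume : Measure E3).comap Subtype.val)).restrict
            (Subtype.val ⁻¹' U))).withDensity (ρ ∘ F))) := by rw [step5]
    _ = Measure.map Φ (Measure.map F (Measure.map e
          (((((volume : Measure E3).comap Subtype.val)).restrict
            (Subtype.val ⁻¹' U)).withDensity ((ρ ∘ F) ∘ e)))) := by
        rw [aux_map_withDensity MP.measurable _ (hρm.comp hFm)]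
    _ = Measure.map (Gmap V ε) (Measure.map Subtype.val
          (((((volume : Measure E3).comap Subtype.val)).restrict
            (Subtype.val ⁻¹' U)).withDensity (ρ' ∘ Subtype.val))) := by
        rw [Measure.map_map hΦm hFm, Measure.map_map (hΦm.comp hFm) MP.measurable,
          hcomp, hdens, ← Measure.map_map hGm measurable_subtype_coe]
    _ = Measure.map (Gmap V ε) ((volume.restrict U).withDensity ρ') := by
        rw [aux_map_withDensity measurable_subtype_coe _ hρ'm, step6]
    _ = volume.restrict (Gmap V ε '' U) := by
        rw [hdensU]
        exact map_withDensity_abs_det_fderiv_eq_addHaar volume hUm.nullMeasurableSet hGderiv hGinj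
    _ = volume.restrict (Φ '' (Set.Ioo 0 T ×ˢ Sp)) := by rw [himage]

end CreationMain


/-- Change of variables for one creation in the backward collision expansion:
for `V ≠ 0`, `ε > 0`, `T > 0`, the map `Φ(t, ω) = εω + tV` is injective on
`(0, T) × S²₊`, and the pushforward under `Φ` of the measure
`ε² (ω·V) dt dσ(ω)` on `(0, T) × S²₊` equals the Lebesgue measure on `ℝ³`
restricted to the image `Φ((0, T) × S²₊)`. Here `σ` is the surface measure
on the unit sphere `S²` of `ℝ³`. -/
theorem creation_change_of_variables
    (V : EuclideanSpace ℝ (Fin 3)) (hV : V ≠ 0) (ε T : ℝ) (hε : 0 < ε) (hT : 0 < T) :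
    Set.InjOn
        (fun p : ℝ × sphere (0 : EuclideanSpace ℝ (Fin 3)) 1 =>
          ε • (p.2 : EuclideanSpace ℝ (Fin 3)) + p.1 • V)
        (Set.Ioo 0 T ×ˢ {ω : sphere (0 : EuclideanSpace ℝ (Fin 3)) 1 |
          0 < ⟪(ω : EuclideanSpace ℝ (Fin 3)), V⟫}) ∧
    Measure.map
        (fun p : ℝ × sphere (0 : EuclideanSpace ℝ (Fin 3)) 1 =>
          ε • (p.2 : EuclideanSpace ℝ (Fin 3)) + p.1 • V)
        (((volume.restrict (Set.Ioo 0 T)).prod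
            (((volume : Measure (EuclideanSpace ℝ (Fin 3))).toSphere).restrict
              {ω : sphere (0 : EuclideanSpace ℝ (Fin 3)) 1 |
                0 < ⟪(ω : EuclideanSpace ℝ (Fin 3)), V⟫})).withDensity
          (fun p => ENNReal.ofReal
            (ε ^ 2 * ⟪(p.2 : EuclideanSpace ℝ (Fin 3)), V⟫)))
      = volume.restrict
          ((fun p : ℝ × sphere (0 : EuclideanSpace ℝ (Fin 3)) 1 =>
              ε • (p.2 : EuclideanSpace ℝ (Fin 3)) + p.1 • V) ''
            (Set.Ioo 0 T ×ˢ {ω : sphere (0 : EuclideanSpace ℝ (Fin 3)) 1 |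
              0 < ⟪(ω : EuclideanSpace ℝ (Fin 3)), V⟫})) :=
  ⟨aux_injOn V ε T hε, aux_measure V hV ε T hε hT⟩
end
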